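/- Let V ≥ 1, N ≥ 0, let β ∈ (0,1) satisfy the β-condition, and let λ > V · ∑_{n=0}^{N} β^n. For any count vectors a, b and stall durations d, e ∈ ℕ, the objective values satisfy f(a,d) > f(b,e) if and only if either d < e, or d = e and a >_lex b. Hence the objective f orders solutions first by minimizing the stall duration and then lexicographically by quality counts with lower levels more significant. -/

import Mathlib

lemma fastscan_key (V N : ℕ) (β : ℝ) (hβ0 : 0 < β)
    (hbeta : ∀ n ≤ N, (V : ℝ) * ∑ k ∈ Finset.Ico (n + 1) (N + 1), β ^ k < β ^ n)
    (a b : ℕ → ℕ) (hb : ∀ k ≤ N, b k ≤ V)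
    (n : ℕ) (hn : n ≤ N) (hlt : b n < a n) (heq : ∀ k < n, a k = b k) :
    ∑ k ∈ Finset.range (N + 1), β ^ k * (b k : ℝ) <
      ∑ k ∈ Finset.range (N + 1), β ^ k * (a k : ℝ) := by
  have hsub : 0 < ∑ k ∈ Finset.range (N + 1), β ^ k * ((a k : ℝ) - b k) := by
    have hsplit : Finset.range (N + 1) =
        Finset.range n ∪ Finset.Ico n (N + 1) := by
      rw [Finset.range_eq_Ico, Finset.range_eq_Ico, Finset.Ico_union_Ico_eq_Ico (Nat.zero_le _) (by omega)]
    rw [hsplit, Finset.sum_union (by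
      simp [Finset.disjoint_left, Finset.mem_range, Finset.mem_Ico]; omega)]
    have h1 : ∑ k ∈ Finset.range n, β ^ k * ((a k : ℝ) - b k) = 0 := by
      apply Finset.sum_eq_zero
      intro k hk
      rw [heq k (Finset.mem_range.mp hk)]
      ring
    rw [h1, zero_add]
    rw [Finset.sum_eq_sum_Ico_succ_bot (by omega : n < N + 1)]
    have h2 : β ^ n * ((a n : ℝ) - b n) ≥ β ^ n := by
      have : (b n : ℝ) + 1 ≤ a n := by exact_mod_cast hlt
      nlinarith [pow_pos hβ0 n]
    have h3 : ∑ k ∈ Finset.Ico (n + 1) (N + 1), β ^ k * ((a k : ℝ) - b k) ≥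
        -((V : ℝ) * ∑ k ∈ Finset.Ico (n + 1) (N + 1), β ^ k) := by
      rw [Finset.mul_sum, ← Finset.sum_neg_distrib]
      apply Finset.sum_le_sum
      intro k hk
      have hk' : k ≤ N := by
        have := (Finset.mem_Ico.mp hk).2; omega
      have hbk : (b k : ℝ) ≤ V := by exact_mod_cast hb k hk'
      have hak : (0 : ℝ) ≤ a k := by positivity
      have hpow : (0 : ℝ) ≤ β ^ k := le_of_lt (pow_pos hβ0 k)
      nlinarith
    have h4 := hbeta n hn
    linarith
  have : ∑ k ∈ Finset.range (N + 1), β ^ k * ((a k : ℝ) - b k) =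
      ∑ k ∈ Finset.range (N + 1), β ^ k * (a k : ℝ) -
        ∑ k ∈ Finset.range (N + 1), β ^ k * (b k : ℝ) := by
    rw [← Finset.sum_sub_distrib]; apply Finset.sum_congr rfl; intro k _; ring
  linarith [this ▸ hsub]

/-- Under the β-condition and `λ > V · ∑_{n=0}^{N} β^n`, the
objective `f(a,d) = ∑_{n=0}^{N} β^n a_n − λ d` orders solutions first by
minimizing the stall duration and then lexicographically by quality counts
with lower levels more significant. -/
theorem fastscan_objective_order (V N : ℕ) (hV : 1 ≤ V) (β lam : ℝ)
    (hβ0 : 0 < β) (hβ1 : β < 1)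
    (hbeta : ∀ n ≤ N, (V : ℝ) * ∑ k ∈ Finset.Ico (n + 1) (N + 1), β ^ k < β ^ n)
    (hlam : lam > (V : ℝ) * ∑ n ∈ Finset.range (N + 1), β ^ n)
    (a b : ℕ → ℕ)
    (ha : ∀ k ≤ N, a k ≤ V) (hb : ∀ k ≤ N, b k ≤ V)
    (d e : ℕ) :
    (∑ n ∈ Finset.range (N + 1), β ^ n * (a n : ℝ) - lam * (d : ℝ) >
        ∑ n ∈ Finset.range (N + 1), β ^ n * (b n : ℝ) - lam * (e : ℝ)) ↔
      (d < e ∨ (d = e ∧ ∃ n ≤ N, b n < a n ∧ ∀ k < n, a k = b k)) := by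
  set Sa := ∑ n ∈ Finset.range (N + 1), β ^ n * (a n : ℝ) with hSa
  set Sb := ∑ n ∈ Finset.range (N + 1), β ^ n * (b n : ℝ) with hSb
  set T := ∑ n ∈ Finset.range (N + 1), β ^ n with hT
  have hbound : ∀ x : ℕ → ℕ, (∀ k ≤ N, x k ≤ V) →
      (0 ≤ ∑ n ∈ Finset.range (N + 1), β ^ n * (x n : ℝ) ∧
        ∑ n ∈ Finset.range (N + 1), β ^ n * (x n : ℝ) ≤ (V : ℝ) * T) := by
    intro x hx
    constructor
    · apply Finset.sum_nonneg; intro k _; positivity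
    · rw [hT, Finset.mul_sum]
      apply Finset.sum_le_sum
      intro k hk
      have hk'' : k ≤ N := Nat.lt_succ_iff.mp (Finset.mem_range.mp hk)
      have : (x k : ℝ) ≤ V := by exact_mod_cast hx k hk''
      have hpow : (0 : ℝ) ≤ β ^ k := le_of_lt (pow_pos hβ0 k)
      nlinarith
  obtain ⟨hSa0, hSaV⟩ := hbound a ha
  obtain ⟨hSb0, hSbV⟩ := hbound b hb
  have hlam0 : 0 < lam := by
    have hT0 : 0 < T := by
      rw [hT]; apply Finset.sum_pos (fun k _ => pow_pos hβ0 k) (by simp)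
    have : (0:ℝ) < (V:ℝ) * T := by positivity
    linarith
  constructor
  · intro h
    rcases lt_trichotomy d e with hde | hde | hde
    · exact Or.inl hde
    · right
      refine ⟨hde, ?_⟩
      subst hde
      have hSab : Sb < Sa := by linarith
      -- find least differing index
      have hex : ∃ n, a n ≠ b n ∧ n ≤ N := by
        by_contra hc
        push_neg at hc
        have : Sa = Sb := by
          rw [hSa, hSb]
          apply Finset.sum_congr rfl
          intro k hk
          have hk' : k ≤ N := Nat.lt_succ_iff.mp (Finset.mem_range.mp hk)
          by_cases h1 : a k = b k
          · rw [h1]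
          · exact absurd (hc k h1) (by omega)
        linarith
      classical
      obtain ⟨n, hn⟩ := hex
      have hex2 : ∃ n, a n ≠ b n := ⟨n, hn.1⟩
      set m := Nat.find hex2 with hm
      have hmne : a m ≠ b m := Nat.find_spec hex2
      have hmlt : ∀ k < m, a k = b k := fun k hk => by
        have h5 := Nat.find_min hex2 (show k < Nat.find hex2 from hm ▸ hk)
        exact not_not.mp h5
      have hmN : m ≤ N := le_trans (Nat.find_min' hex2 hn.1) hn.2
      rcases Nat.lt_or_ge (b m) (a m) with h1 | h1
      · exact ⟨m, hmN, h1, hmlt⟩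
      · exfalso
        have h2 : a m < b m := by omega
        have := fastscan_key V N β hβ0 hbeta b a ha m hmN h2
          (fun k hk => (hmlt k hk).symm)
        rw [← hSa, ← hSb] at this
        linarith
    · exfalso
      have : (e : ℝ) + 1 ≤ d := by exact_mod_cast hde
      nlinarith
  · rintro (h | ⟨hde, n, hn, hlt, heq⟩)
    · have : (d : ℝ) + 1 ≤ e := by exact_mod_cast h
      nlinarith
    · subst hde
      have := fastscan_key V N β hβ0 hbeta a b hb n hn hlt heq
      rw [← hSa, ← hSb] at this
      linarith
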